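/- Let A, B be finite types with |A| = |B| = N ≥ 1, let E : A → B → Prop be a decidable relation, and let P ⊆ A, Q ⊆ B be finite sets with |P| = |Q| = q₁ ≥ 1 such that E a b holds for all a ∈ P, b ∈ Q. Let n, ℓ, t₁ be natural numbers with n · (q₁ / N)^{ℓ} ≥ 10 · 2^{t₁} (as real numbers). Sample S : Fin n → (Fin ℓ → A) and T : Fin n → (Fin ℓ → B) uniformly at random (all n·ℓ coordinates on each side independent and uniform). Then with probability at least 9/10, there exist I, J : Finset (Fin n) with |I| = |J| = 2^{t₁} such that E (S i k) (T j k') holds for all i ∈ I, j ∈ J and all k, k' : Fin ℓ. -/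

import Mathlib

open Finset

set_option maxHeartbeats 2000000 in
theorem one_side_count {β : Type*} [Fintype β] [DecidableEq β] (G : Finset β) (n m : ℕ)
    (hm : 1 ≤ m)
    (hc : 10 * (m : ℝ) ≤ (n : ℝ) * ((G.card : ℝ) / (Fintype.card β : ℝ)))
    (hM : 0 < Fintype.card β) :
    (19/20 : ℝ) * (Fintype.card β : ℝ) ^ n ≤
      ((univ.filter (fun S : Fin n → β =>
        m ≤ (univ.filter fun i => S i ∈ G).card)).card : ℝ) := by
  classical
  set M := Fintype.card β with hMdef
  set a := G.card with hadef
  set Gc := univ.filter (fun x => x ∉ G) with hGc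
  set b := Gc.card with hbdef
  have hab : a + b = M := by
    have := card_filter_add_card_filter_not (s := (univ : Finset β)) (fun x => x ∈ G)
    simpa [← hadef, ← hbdef, hGc, card_univ, filter_mem_eq_inter] using this
  have haM : a ≤ M := by omega
  -- counting the bad sets
  set f : (Fin n → β) → Finset (Fin n) := fun S => univ.filter (fun i => S i ∈ G) with hf
  set t : Finset (Finset (Fin n)) := univ.filter (fun U => U.card < m) with ht
  set Bad := univ.filter (fun S : Fin n → β => (f S).card < m) with hBad
  have hfiber : ∀ U ∈ t, (Bad.filter (fun S => f S = U)).card = a ^ U.card * b ^ (n - U.card) := by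
    intro U hU
    have hUm : U.card < m := by simpa [ht] using hU
    have h1 : Bad.filter (fun S => f S = U) = Fintype.piFinset (fun i => if i ∈ U then G else Gc) := by
      ext S
      simp only [hBad, mem_filter, mem_univ, true_and, Fintype.mem_piFinset]
      constructor
      · rintro ⟨-, hfU⟩ i
        by_cases hi : i ∈ U
        · simp only [if_pos hi]
          have h3 : i ∈ f S := hfU ▸ hi
          simpa [hf] using h3
        · simp only [if_neg hi]
          have h3 : i ∉ f S := by rw [hfU]; exact hi
          simp only [hf, mem_filter, mem_univ, true_and] at h3
          simp [hGc, h3]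
      · intro h
        have hfU : f S = U := by
          ext i
          have := h i
          by_cases hi : i ∈ U
          · simp only [if_pos hi] at this
            simp [hf, this, hi]
          · simp only [if_neg hi, hGc, mem_filter] at this
            simp [hf, this.2, hi]
        exact ⟨hfU ▸ hUm, hfU⟩
    rw [h1, Fintype.card_piFinset]
    have : ∀ i : Fin n, (if i ∈ U then G else Gc).card = if i ∈ U then a else b := by
      intro i; by_cases hi : i ∈ U <;> simp [hi, hadef, hbdef]
    rw [Finset.prod_congr rfl (fun i _ => this i), Finset.prod_ite]
    simp only [prod_const]
    congr 1
    · congr 1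
      simp [filter_mem_eq_inter]
    · congr 1
      have : univ.filter (fun i : Fin n => i ∉ U) = Uᶜ := by
        ext i; simp
      rw [this, card_compl, Fintype.card_fin]
  have hBadcount : Bad.card = ∑ U ∈ t, a ^ U.card * b ^ (n - U.card) := by
    rw [Finset.card_eq_sum_card_fiberwise (f := f) (t := t)
      (fun S hS => by simpa [ht] using (by simpa [hBad] using hS : (f S).card < m))]
    exact Finset.sum_congr rfl hfiber
  -- real bound on Bad
  have hMpos : (0:ℝ) < M := by exact_mod_cast hM
  have hbr : (b : ℝ) = M - a := by
    have : (a:ℝ) + b = M := by exact_mod_cast hab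
    linarith
  have step1 : (Bad.card : ℝ) ≤ (10:ℝ) ^ m * ((a:ℝ)/10 + b) ^ n := by
    rw [hBadcount]
    push_cast
    calc ∑ U ∈ t, (a:ℝ) ^ U.card * (b:ℝ) ^ (n - U.card)
        ≤ ∑ U ∈ t, (10:ℝ)^m * (((a:ℝ)/10) ^ U.card * (b:ℝ) ^ (n - U.card)) := by
          apply Finset.sum_le_sum
          intro U hU
          have hUm : U.card < m := by simpa [ht] using hU
          have h10 : (10:ℝ) ^ U.card ≤ 10 ^ m := by
            apply pow_le_pow_right₀ (by norm_num) hUm.le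
          have ha' : (a:ℝ) ^ U.card = 10 ^ U.card * ((a:ℝ)/10) ^ U.card := by
            rw [← mul_pow]; ring_nf
          rw [ha']
          have hnn : (0:ℝ) ≤ ((a:ℝ)/10) ^ U.card * (b:ℝ) ^ (n - U.card) := by positivity
          calc 10 ^ U.card * ((a:ℝ)/10) ^ U.card * (b:ℝ) ^ (n - U.card)
              = 10 ^ U.card * (((a:ℝ)/10) ^ U.card * (b:ℝ) ^ (n - U.card)) := by ring
            _ ≤ (10:ℝ)^m * (((a:ℝ)/10) ^ U.card * (b:ℝ) ^ (n - U.card)) := by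
                exact mul_le_mul_of_nonneg_right h10 hnn
      _ = (10:ℝ)^m * ∑ U ∈ t, (((a:ℝ)/10) ^ U.card * (b:ℝ) ^ (n - U.card)) := by
          rw [Finset.mul_sum]
      _ ≤ (10:ℝ)^m * ∑ U ∈ (univ : Finset (Finset (Fin n))), (((a:ℝ)/10) ^ U.card * (b:ℝ) ^ (n - U.card)) := by
          apply mul_le_mul_of_nonneg_left _ (by positivity)
          apply Finset.sum_le_sum_of_subset_of_nonneg (filter_subset _ _)
          intro U _ _; positivity
      _ = (10:ℝ)^m * ((a:ℝ)/10 + b) ^ n := by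
          congr 1
          have h := Finset.prod_add (fun _ : Fin n => (a:ℝ)/10) (fun _ : Fin n => (b:ℝ)) univ
          rw [powerset_univ] at h
          simp only [prod_const, card_univ, Fintype.card_fin] at h
          rw [h]
          apply Finset.sum_congr rfl
          intro U _
          congr 1
          rw [card_sdiff_of_subset (subset_univ U), card_univ, Fintype.card_fin]
  have hp1 : (a:ℝ)/M ≤ 1 := by
    rw [div_le_one hMpos]; exact_mod_cast haM
  have hpnn : (0:ℝ) ≤ (a:ℝ)/M := by positivity
  have step2 : ((a:ℝ)/10 + b) ^ n ≤ (M:ℝ)^n * Real.exp (-(9 * m)) := by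
    have heq : (a:ℝ)/10 + b = M * (1 - (9/10) * ((a:ℝ)/M)) := by
      rw [hbr]; field_simp; ring
    rw [heq, mul_pow]
    apply mul_le_mul_of_nonneg_left _ (by positivity)
    calc (1 - 9/10 * ((a:ℝ)/M)) ^ n
        ≤ (Real.exp (-(9/10 * ((a:ℝ)/M)))) ^ n := by
          apply pow_le_pow_left₀ (by nlinarith)
          linarith [Real.add_one_le_exp (-(9/10 * ((a:ℝ)/M)))]
      _ = Real.exp ((n:ℝ) * (-(9/10 * ((a:ℝ)/M)))) := by rw [Real.exp_nat_mul]
      _ ≤ Real.exp (-(9*m)) := by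
          apply Real.exp_le_exp.mpr
          have : 10 * (m:ℝ) ≤ (n:ℝ) * ((a:ℝ)/M) := hc
          nlinarith
  have hkey : (Bad.card : ℝ) ≤ (1/20 : ℝ) * (M:ℝ)^n := by
    calc (Bad.card : ℝ) ≤ (10:ℝ)^m * ((a:ℝ)/10 + b) ^ n := step1
      _ ≤ (10:ℝ)^m * ((M:ℝ)^n * Real.exp (-(9*m))) :=
          mul_le_mul_of_nonneg_left step2 (by positivity)
      _ = (10 * Real.exp (-9))^m * (M:ℝ)^n := by
          rw [mul_pow, show (-(9*(m:ℝ))) = (m:ℝ) * (-9) by ring, Real.exp_nat_mul]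
          ring
      _ ≤ (1/20:ℝ)^m * (M:ℝ)^n := by
          apply mul_le_mul_of_nonneg_right _ (by positivity)
          apply pow_le_pow_left₀ (by positivity)
          rw [Real.exp_neg]
          rw [show (10:ℝ) * (Real.exp 9)⁻¹ = 10 / Real.exp 9 by ring, div_le_iff₀ (Real.exp_pos 9)]
          have h9 : (200:ℝ) ≤ Real.exp 9 := by
            have := Real.exp_one_gt_d9
            calc (200:ℝ) ≤ 2.7182818283 ^ (9:ℕ) := by norm_num
              _ ≤ (Real.exp 1) ^ (9:ℕ) := by
                  apply pow_le_pow_left₀ (by norm_num) this.le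
              _ = Real.exp 9 := by
                  rw [← Real.exp_nat_mul]; norm_num
          nlinarith
      _ ≤ (1/20:ℝ) * (M:ℝ)^n := by
          apply mul_le_mul_of_nonneg_right _ (by positivity)
          calc (1/20:ℝ)^m ≤ (1/20:ℝ)^1 := by
                apply pow_le_pow_of_le_one (by norm_num) (by norm_num) hm
            _ = 1/20 := pow_one _
  -- conclude
  have htot : Bad.card + (univ.filter (fun S : Fin n → β =>
      m ≤ (univ.filter fun i => S i ∈ G).card)).card = M ^ n := by
    have h2 := card_filter_add_card_filter_not (s := (univ : Finset (Fin n → β)))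
      (fun S => (f S).card < m)
    simp only [not_lt] at h2
    rw [card_univ, Fintype.card_fun, Fintype.card_fin] at h2
    exact h2
  have : ((univ.filter (fun S : Fin n → β =>
      m ≤ (univ.filter fun i => S i ∈ G).card)).card : ℝ) = (M:ℝ)^n - Bad.card := by
    have := htot
    have h : (Bad.card : ℝ) + ((univ.filter (fun S : Fin n → β =>
      m ≤ (univ.filter fun i => S i ∈ G).card)).card : ℝ) = (M:ℝ)^n := by exact_mod_cast this
    linarith
  rw [this]
  linarith

set_option maxHeartbeats 1000000 in
theorem two_sided_product_completeness {A B : Type*} [Fintype A] [Fintype B]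
    (N : ℕ) (hN : 1 ≤ N) (hA : Fintype.card A = N) (hB : Fintype.card B = N)
    (E : A → B → Prop) [∀ a b, Decidable (E a b)]
    (q₁ : ℕ) (hq₁ : 1 ≤ q₁)
    (P : Finset A) (Q : Finset B) (hP : P.card = q₁) (hQ : Q.card = q₁)
    (hE : ∀ a ∈ P, ∀ b ∈ Q, E a b)
    (n ℓ t₁ : ℕ)
    (hcount : 10 * 2 ^ t₁ ≤ (n : ℝ) * ((q₁ : ℝ) / (N : ℝ)) ^ ℓ) :
    (9 : ℝ) / 10 ≤
      (Nat.card {ST : (Fin n → (Fin ℓ → A)) × (Fin n → (Fin ℓ → B)) //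
          ∃ I J : Finset (Fin n), I.card = 2 ^ t₁ ∧ J.card = 2 ^ t₁ ∧
            ∀ i ∈ I, ∀ j ∈ J, ∀ k k' : Fin ℓ, E (ST.1 i k) (ST.2 j k')} : ℝ) /
        (Nat.card ((Fin n → (Fin ℓ → A)) × (Fin n → (Fin ℓ → B))) : ℝ) := by
  classical
  set m := 2 ^ t₁ with hmdef
  have hm : 1 ≤ m := Nat.one_le_two_pow
  set GA : Finset (Fin ℓ → A) := Fintype.piFinset (fun _ => P) with hGAdef
  set GB : Finset (Fin ℓ → B) := Fintype.piFinset (fun _ => Q) with hGBdef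
  have hGA : GA.card = q₁ ^ ℓ := by simp [hGAdef, Fintype.card_piFinset, hP]
  have hGB : GB.card = q₁ ^ ℓ := by simp [hGBdef, Fintype.card_piFinset, hQ]
  have hcardA : Fintype.card (Fin ℓ → A) = N ^ ℓ := by
    rw [Fintype.card_fun, Fintype.card_fin, hA]
  have hcardB : Fintype.card (Fin ℓ → B) = N ^ ℓ := by
    rw [Fintype.card_fun, Fintype.card_fin, hB]
  have hMA : 0 < Fintype.card (Fin ℓ → A) := by rw [hcardA]; positivity
  have hMB : 0 < Fintype.card (Fin ℓ → B) := by rw [hcardB]; positivity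
  have hc' : 10 * (m : ℝ) ≤ (n : ℝ) * ((q₁ ^ ℓ : ℕ) / ((N ^ ℓ : ℕ) : ℝ)) := by
    push_cast [hmdef]
    rw [← div_pow]
    exact hcount
  have hSide1 := one_side_count GA n m hm (by rw [hGA, hcardA]; exact hc') hMA
  have hSide2 := one_side_count GB n m hm (by rw [hGB, hcardB]; exact hc') hMB
  set GoodS := Finset.univ.filter (fun S : Fin n → (Fin ℓ → A) =>
    m ≤ (Finset.univ.filter fun i => S i ∈ GA).card) with hGoodS
  set GoodT := Finset.univ.filter (fun T : Fin n → (Fin ℓ → B) =>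
    m ≤ (Finset.univ.filter fun i => T i ∈ GB).card) with hGoodT
  set Pr : (Fin n → (Fin ℓ → A)) × (Fin n → (Fin ℓ → B)) → Prop := fun ST =>
    ∃ I J : Finset (Fin n), I.card = m ∧ J.card = m ∧
      ∀ i ∈ I, ∀ j ∈ J, ∀ k k' : Fin ℓ, E (ST.1 i k) (ST.2 j k') with hPr
  have hsub : GoodS ×ˢ GoodT ⊆ Finset.univ.filter Pr := by
    intro ST hST
    rw [Finset.mem_product] at hST
    obtain ⟨hS, hT⟩ := hST
    rw [hGoodS, Finset.mem_filter] at hS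
    rw [hGoodT, Finset.mem_filter] at hT
    obtain ⟨I, hIsub, hIcard⟩ := Finset.exists_subset_card_eq hS.2
    obtain ⟨J, hJsub, hJcard⟩ := Finset.exists_subset_card_eq hT.2
    rw [Finset.mem_filter]
    refine ⟨Finset.mem_univ _, I, J, hIcard, hJcard, ?_⟩
    intro i hi j hj k k'
    have h1 : ST.1 i ∈ GA := (Finset.mem_filter.mp (hIsub hi)).2
    have h2 : ST.2 j ∈ GB := (Finset.mem_filter.mp (hJsub hj)).2
    rw [hGAdef, Fintype.mem_piFinset] at h1
    rw [hGBdef, Fintype.mem_piFinset] at h2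
    exact hE _ (h1 k) _ (h2 k')
  have hcard1 : Nat.card {ST : (Fin n → (Fin ℓ → A)) × (Fin n → (Fin ℓ → B)) // Pr ST}
      = (Finset.univ.filter Pr).card := by
    rw [Nat.card_eq_fintype_card, Fintype.card_subtype]
  have hcard2 : Nat.card ((Fin n → (Fin ℓ → A)) × (Fin n → (Fin ℓ → B)))
      = (N ^ ℓ) ^ n * (N ^ ℓ) ^ n := by
    rw [Nat.card_eq_fintype_card]
    simp [Fintype.card_prod, Fintype.card_fun, hA, hB]
  have hXlb : ((GoodS.card : ℝ)) * (GoodT.card : ℝ) ≤ ((Finset.univ.filter Pr).card : ℝ) := by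
    have h := Finset.card_le_card hsub
    rw [Finset.card_product] at h
    exact_mod_cast h
  rw [hcardA] at hSide1
  rw [hcardB] at hSide2
  push_cast at hSide1 hSide2
  rw [hcard1, hcard2]
  push_cast
  have hMn : (0:ℝ) < ((N:ℝ)^ℓ)^n := by
    have : (0:ℝ) < (N:ℝ) := by exact_mod_cast hN
    positivity
  rw [le_div_iff₀ (by positivity)]
  have hmul : (19/20 * ((N:ℝ)^ℓ)^n) * (19/20 * ((N:ℝ)^ℓ)^n)
      ≤ ((GoodS.card : ℝ)) * (GoodT.card : ℝ) :=
    mul_le_mul hSide1 hSide2 (by positivity) (by positivity)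
  nlinarith [hmul, hXlb, sq_nonneg (((N:ℝ)^ℓ)^n)]
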